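/- Let t be a binary search tree and let x and y be keys occupying adjacent positions in the in-order traversal of t. Then it is not the case that both the subtree of t rooted at x and the subtree of t rooted at y are complete knots, i.e., at least one of the two subtrees has an empty left child or an empty right child. -/

import Mathlib

/-- Binary trees over a type `α`. -/
inductive BTree (α : Type*) where
  | nil : BTree α
  | node (l : BTree α) (a : α) (r : BTree α) : BTree α
  deriving DecidableEq

namespace BTree

variable {α : Type*}

/-- In-order traversal. -/
def inorder : BTree α → List α
  | nil => []
  | node l a r => inorder l ++ [a] ++ inorder r

/-- Key membership in a tree. -/
def Mem : BTree α → α → Prop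
  | nil, _ => False
  | node l a r, x => Mem l x ∨ x = a ∨ Mem r x

/-- `IsSubtree s t` means `s` occurs as a subtree of `t`. -/
inductive IsSubtree : BTree α → BTree α → Prop
  | refl (t : BTree α) : IsSubtree t t
  | left {s l r : BTree α} {a : α} : IsSubtree s l → IsSubtree s (node l a r)
  | right {s l r : BTree α} {a : α} : IsSubtree s r → IsSubtree s (node l a r)

/-- `x` and `y` occupy adjacent positions in the list `L` (`x` immediately before `y`). -/
def Adjacent (L : List α) (x y : α) : Prop :=
  ∃ i : ℕ, L[i]? = some x ∧ L[i + 1]? = some y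

variable [LinearOrder α]

/-- The binary-search-tree property: at every node, all keys of the left subtree are
smaller than the root key and all keys of the right subtree are larger. -/
def IsBST : BTree α → Prop
  | nil => True
  | node l a r => (∀ x, Mem l x → x < a) ∧ (∀ x, Mem r x → a < x) ∧ IsBST l ∧ IsBST r

/-- `Ancestor t x y`: the key `x` is an ancestor of the key `y` in `t`, i.e. `y` occurs
in a proper subtree of the subtree of `t` rooted at `x`. -/
def Ancestor (t : BTree α) (x y : α) : Prop :=
  ∃ l r : BTree α, IsSubtree (node l x r) t ∧ (Mem l y ∨ Mem r y)

/-- Depth (number of edges from the root) of a key in a binary search tree,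
computed by the standard search path. -/
def depth : BTree α → α → ℕ
  | nil, _ => 0
  | node l a r, x => if x = a then 0 else if x < a then depth l x + 1 else depth r x + 1



lemma mem_inorder {t : BTree α} {z : α} : z ∈ inorder t ↔ Mem t z := by
  induction t with
  | nil => simp [inorder, Mem]
  | node l a r ihl ihr => simp [inorder, Mem, ihl, ihr]

lemma mem_of_subtree {s t : BTree α} (h : IsSubtree s t) {z : α} (hz : Mem s z) : Mem t z := by
  induction h with
  | refl => exact hz
  | left _ ih => exact Or.inl ih
  | right _ ih => exact Or.inr (Or.inr ih)

lemma bst_of_subtree {s t : BTree α} (h : IsSubtree s t) (ht : IsBST t) : IsBST s := by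
  induction h with
  | refl => exact ht
  | left _ ih => exact ih ht.2.2.1
  | right _ ih => exact ih ht.2.2.2

lemma sorted_inorder {t : BTree α} (ht : IsBST t) : (inorder t).Pairwise (· < ·) := by
  induction t with
  | nil => simp [inorder]
  | node l a r ihl ihr =>
    obtain ⟨hl, hr, hbl, hbr⟩ := ht
    simp only [inorder, List.append_assoc]
    rw [List.pairwise_append]
    refine ⟨ihl hbl, ?_, ?_⟩
    · rw [List.singleton_append, List.pairwise_cons]
      exact ⟨fun b hb => hr b (mem_inorder.1 hb), ihr hbr⟩
    · intro u hu v hv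
      have hu' := hl u (mem_inorder.1 hu)
      rcases List.mem_append.1 hv with hv | hv
      · simp only [List.mem_singleton] at hv; subst hv; exact hu'
      · exact hu'.trans (hr v (mem_inorder.1 hv))

lemma infix_of_subtree {s t : BTree α} (h : IsSubtree s t) : inorder s <:+: inorder t := by
  induction h with
  | refl => exact List.infix_refl _
  | @left l r a _ ih =>
    exact ih.trans ⟨[], [a] ++ inorder r, by simp [inorder]⟩
  | @right l r a _ ih =>
    exact ih.trans ⟨inorder l ++ [a], [], by simp [inorder]⟩

-- two subtrees sharing a member are nested
lemma nested {t : BTree α} (hnd : (inorder t).Nodup) {s1 s2 : BTree α}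
    (h1 : IsSubtree s1 t) (h2 : IsSubtree s2 t) {z : α} (hz1 : Mem s1 z) (hz2 : Mem s2 z) :
    IsSubtree s1 s2 ∨ IsSubtree s2 s1 := by
  induction t with
  | nil => cases h1; cases h2; exact Or.inl (IsSubtree.refl _)
  | node l a r ihl ihr =>
    have hnd' := hnd
    simp only [inorder, List.append_assoc, List.nodup_append, List.singleton_append,
      List.nodup_cons] at hnd'
    obtain ⟨hndl, ⟨-, hndr⟩, hdisj⟩ := hnd'
    cases h1 with
    | refl => exact Or.inr h2
    | left h1' =>
      cases h2 with
      | refl => exact Or.inl (IsSubtree.left h1')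
      | left h2' => exact ihl hndl h1' h2'
      | right h2' =>
        exfalso
        have hz1' : z ∈ inorder l := mem_inorder.2 (mem_of_subtree h1' hz1)
        have hz2' : z ∈ inorder r := mem_inorder.2 (mem_of_subtree h2' hz2)
        exact (hdisj z hz1' z (List.mem_cons_of_mem _ hz2')) rfl
    | right h1' =>
      cases h2 with
      | refl => exact Or.inl (IsSubtree.right h1')
      | left h2' =>
        exfalso
        have hz1' : z ∈ inorder r := mem_inorder.2 (mem_of_subtree h1' hz1)
        have hz2' : z ∈ inorder l := mem_inorder.2 (mem_of_subtree h2' hz2)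
        exact (hdisj z hz2' z (List.mem_cons_of_mem _ hz1')) rfl
      | right h2' => exact ihr hndr h1' h2'


lemma inorder_eq_nil {t : BTree α} : inorder t = [] ↔ t = nil := by
  cases t <;> simp [inorder]

lemma adj_right {L A B : List α} {x w : α} (hnd : L.Nodup)
    (h : (A ++ x :: B) <:+: L) (hB : B ≠ []) {i : ℕ}
    (hx : L[i]? = some x) (hw : L[i + 1]? = some w) : w ∈ B := by
  obtain ⟨p, q, hpq⟩ := h
  have hL : L = (p ++ A) ++ x :: (B ++ q) := by
    rw [← hpq]; simp
  set j := (p ++ A).length with hj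
  have hjx : L[j]? = some x := by
    rw [hL, List.getElem?_append_right (le_refl _)]
    simp
  have hij : i = j := by
    refine (List.getElem?_inj ?_ hnd).1 (hx.trans hjx.symm)
    exact (List.getElem?_eq_some_iff.1 hx).1
  subst hij
  obtain ⟨b, B', rfl⟩ := List.exists_cons_of_ne_nil hB
  have hj' : j = p.length + A.length := by simp [hj]
  have : L[j + 1]? = some b := by
    rw [hL, List.getElem?_append_right (by simp [hj'])]
    rw [show j + 1 - (p ++ A).length = 1 by simp [hj']]
    simp
  rw [hw] at this
  simp only [Option.some_inj] at this
  subst this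
  exact List.mem_cons_self

lemma adj_left {L A B : List α} {y w : α} (hnd : L.Nodup)
    (h : (A ++ y :: B) <:+: L) (hA : A ≠ []) {i : ℕ}
    (hy : L[i + 1]? = some y) (hw : L[i]? = some w) : w ∈ A := by
  obtain ⟨p, q, hpq⟩ := h
  obtain rfl | ⟨C, c, rfl⟩ := List.eq_nil_or_concat' A
  · exact absurd rfl hA
  have hL : L = (p ++ C) ++ c :: (y :: B ++ q) := by
    rw [← hpq]; simp
  set j := (p ++ C).length with hj
  have hjc : L[j]? = some c := by
    rw [hL, List.getElem?_append_right (le_refl _)]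
    simp
  have hj' : j = p.length + C.length := by simp [hj]
  have hjy : L[j + 1]? = some y := by
    rw [hL, List.getElem?_append_right (by simp [hj'])]
    rw [show j + 1 - (p ++ C).length = 1 by simp [hj']]
    simp
  have hij : i + 1 = j + 1 := by
    refine (List.getElem?_inj ?_ hnd).1 (hy.trans hjy.symm)
    exact (List.getElem?_eq_some_iff.1 hy).1
  have : i = j := by omega
  subst this
  rw [hw] at hjc
  simp only [Option.some_inj] at hjc
  subst hjc
  simp


/-- two keys adjacent in the in-order traversal of a BST cannot both be
complete knots; at least one of their rooted subtrees has an empty child. -/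
theorem not_both_complete_knots (t : BTree α) (ht : IsBST t) (x y : α)
    (hadj : Adjacent (inorder t) x y) (lx rx ly ry : BTree α)
    (hx : IsSubtree (node lx x rx) t) (hy : IsSubtree (node ly y ry) t) :
    lx = nil ∨ rx = nil ∨ ly = nil ∨ ry = nil := by
  by_contra hcon
  push_neg at hcon
  obtain ⟨hlx, hrx, hly, hry⟩ := hcon
  obtain ⟨i, hxi, hyi⟩ := hadj
  have hsort := sorted_inorder ht
  have hnd : (inorder t).Nodup := hsort.nodup
  -- x < y
  have hilt := (List.getElem?_eq_some_iff.1 hxi)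
  have hjlt := (List.getElem?_eq_some_iff.1 hyi)
  have hxy : x < y := by
    have := List.pairwise_iff_getElem.1 hsort i (i+1) hilt.1 hjlt.1 (by omega)
    rwa [hilt.2, hjlt.2] at this
  -- y ∈ rx
  have hinx : (inorder lx ++ x :: inorder rx) <:+: inorder t := by
    have := infix_of_subtree hx
    simpa [inorder] using this
  have hiny : (inorder ly ++ y :: inorder ry) <:+: inorder t := by
    have := infix_of_subtree hy
    simpa [inorder] using this
  have hyrx : Mem rx y := mem_inorder.1 <|
    adj_right hnd hinx (fun h => hrx (inorder_eq_nil.1 h)) hxi hyi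
  have hxly : Mem ly x := mem_inorder.1 <|
    adj_left hnd hiny (fun h => hly (inorder_eq_nil.1 h)) hyi hxi
  have hbx : IsBST (node lx x rx) := bst_of_subtree hx ht
  have hby : IsBST (node ly y ry) := bst_of_subtree hy ht
  have hmem1 : Mem (node lx x rx) x := Or.inr (Or.inl rfl)
  have hmem2 : Mem (node ly y ry) x := Or.inl hxly
  rcases nested hnd hx hy hmem1 hmem2 with hc | hc
  · cases hc with
    | refl => exact absurd rfl hxy.ne
    | left h =>
      have : Mem ly y := mem_of_subtree h (Or.inr (Or.inr hyrx))
      exact absurd (hby.1 y this) (lt_irrefl y)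
    | right h =>
      have : Mem ry x := mem_of_subtree h hmem1
      exact absurd (hby.2.1 x this) (not_lt.2 hxy.le)
  · cases hc with
    | refl => exact absurd rfl hxy.ne
    | left h =>
      have : Mem lx y := mem_of_subtree h (Or.inr (Or.inl rfl))
      exact absurd (hbx.1 y this) (not_lt.2 hxy.le)
    | right h =>
      have : Mem rx x := mem_of_subtree h hmem2
      exact absurd (hbx.2.1 x this) (lt_irrefl x)



end BTree
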